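/- Let μ, ν ∈ 𝓜 satisfy condition (M.2) and let p > 1. Let Λ : ℝ×ℝ → ℝ be continuous, almost periodic in t uniformly in x on compact sets, and Lipschitz in the second variable with a positive continuous function L^Λ : ℝ → (0,∞) satisfying ∫_ℝ L^Λ(t)^p dμ(t) < ∞ and |Λ(t,u) − Λ(t,v)| ≤ L^Λ(t)|u−v| for all t, u, v ∈ ℝ. Then for every y ∈ 𝓟𝓐𝓟(ℝ,ℝ,μ,ν) and every θ ∈ ℝ, the function s ↦ Λ(s, y(s−θ)) belongs to 𝓟𝓐𝓟(ℝ,ℝ,μ,ν). -/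

import Mathlib

open MeasureTheory Filter Topology

noncomputable section

/-- The class `𝓜` of positive measures on `ℝ`: infinite total mass, finite on compact
intervals. -/
def InM (μ : Measure ℝ) : Prop :=
  μ Set.univ = ⊤ ∧ ∀ s t : ℝ, s ≤ t → μ (Set.Icc s t) < ⊤

/-- Bohr almost periodic function. -/
def AP {E : Type*} [NormedAddCommGroup E] (f : ℝ → E) : Prop :=
  Continuous f ∧ ∀ ε : ℝ, 0 < ε → ∃ l : ℝ, 0 < l ∧ ∀ a : ℝ,
    ∃ τ ∈ Set.Icc a (a + l), ∀ t : ℝ, ‖f (t + τ) - f t‖ < ε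

/-- Bounded continuous function. -/
def BC {E : Type*} [NormedAddCommGroup E] (f : ℝ → E) : Prop :=
  Continuous f ∧ ∃ C : ℝ, ∀ t : ℝ, ‖f t‖ ≤ C

/-- The ergodic space `𝓔(ℝ, E, μ, ν)`. -/
def Erg {E : Type*} [NormedAddCommGroup E] (μ ν : Measure ℝ) (f : ℝ → E) : Prop :=
  BC f ∧ Filter.Tendsto (fun z : ℝ =>
      ((ν (Set.Icc (-z) z)).toReal)⁻¹ * ∫ t in Set.Icc (-z) z, ‖f t‖ ∂μ)
    Filter.atTop (nhds 0)

/-- `(μ,ν)`-pseudo almost periodic functions `𝓟𝓐𝓟(ℝ, E, μ, ν)`. -/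
def PAP {E : Type*} [NormedAddCommGroup E] (μ ν : Measure ℝ) (f : ℝ → E) : Prop :=
  BC f ∧ ∃ g φ : ℝ → E, AP g ∧ Erg μ ν φ ∧ ∀ t, f t = g t + φ t

/-- Condition (M.1). -/
def M1 (μ : Measure ℝ) : Prop :=
  ∀ τ : ℝ, ∃ β : ℝ, 0 < β ∧ ∃ a b : ℝ, ∀ A : Set ℝ, MeasurableSet A →
    A ∩ Set.Icc a b = ∅ → μ ((fun x => x + τ) '' A) ≤ ENNReal.ofReal β * μ A

/-- Condition (M.2). -/
def M2 (μ ν : Measure ℝ) : Prop :=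
  Filter.limsup (fun r : ℝ => μ (Set.Icc (-r) r) / ν (Set.Icc (-r) r)) Filter.atTop < ⊤

/-- Almost periodic in `t`, uniformly with respect to `x` in compact sets. -/
def APU (F : ℝ → ℝ → ℝ) : Prop :=
  Continuous (fun p : ℝ × ℝ => F p.1 p.2) ∧
  ∀ K : Set ℝ, IsCompact K → ∀ ε : ℝ, 0 < ε → ∃ l : ℝ, 0 < l ∧ ∀ a : ℝ,
    ∃ τ ∈ Set.Icc a (a + l), ∀ t : ℝ, ∀ x ∈ K, |F (t + τ) x - F t x| < ε

/-- Uniformly ergodic (with respect to compact sets in the second variable). -/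
def ErgU (μ ν : Measure ℝ) (H : ℝ → ℝ → ℝ) : Prop :=
  ∀ K : Set ℝ, IsCompact K →
    Filter.Tendsto (fun z : ℝ =>
        ((ν (Set.Icc (-z) z)).toReal)⁻¹ *
          ∫ t in Set.Icc (-z) z, (⨆ x : K, |H t (x : ℝ)|) ∂μ)
      Filter.atTop (nhds 0)

/-- `(μ,ν)`-pseudo almost periodic in `t` uniformly in `x`. -/
def PAPU (μ ν : Measure ℝ) (F : ℝ → ℝ → ℝ) : Prop :=
  ∃ G H : ℝ → ℝ → ℝ, APU G ∧ Continuous (fun p : ℝ × ℝ => H p.1 p.2) ∧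
    ErgU μ ν H ∧ ∀ t x, F t x = G t x + H t x

lemma InM.finOnCompacts {μ : Measure ℝ} (hμ : InM μ) : IsFiniteMeasureOnCompacts μ := by
  constructor
  intro K hK
  obtain ⟨r, hr⟩ := hK.isBounded.subset_closedBall 0
  have h1 : K ⊆ Set.Icc (-(max r 0)) (max r 0) := by
    intro x hx
    have h2 := hr hx
    rw [Metric.mem_closedBall, Real.dist_eq, sub_zero] at h2
    exact abs_le.1 (le_trans h2 (le_max_left r 0))
  exact lt_of_le_of_lt (measure_mono h1) (hμ.2 _ _ (neg_le_self (le_max_right r 0)))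

lemma apu_bound {Λ : ℝ → ℝ → ℝ} (h : APU Λ) {K : Set ℝ} (hK : IsCompact K) :
    ∃ M : ℝ, ∀ t : ℝ, ∀ x ∈ K, |Λ t x| ≤ M := by
  obtain ⟨l, hl, H⟩ := h.2 K hK 1 one_pos
  obtain ⟨M₀, hM₀⟩ := (isCompact_Icc.prod hK).exists_bound_of_continuousOn
    (h.1.continuousOn (s := Set.Icc (0:ℝ) l ×ˢ K))
  refine ⟨M₀ + 1, fun t x hx => ?_⟩
  obtain ⟨τ, hτ, hτ'⟩ := H (t - l)
  have h1 : t - l ≤ τ := hτ.1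
  have h2 : τ ≤ t := by have := hτ.2; linarith
  have hmem : t - τ ∈ Set.Icc (0:ℝ) l := ⟨by linarith, by linarith⟩
  have hst : (t - τ, x) ∈ Set.Icc (0:ℝ) l ×ˢ K := Set.mem_prod.2 ⟨hmem, hx⟩
  have hb : |Λ (t - τ) x| ≤ M₀ := by
    have := hM₀ _ hst
    simpa [Real.norm_eq_abs] using this
  have key : |Λ (t - τ + τ) x - Λ (t - τ) x| < 1 := hτ' (t - τ) x hx
  rw [sub_add_cancel] at key
  calc |Λ t x| = |Λ (t - τ) x + (Λ t x - Λ (t - τ) x)| := by ring_nf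
    _ ≤ |Λ (t - τ) x| + |Λ t x - Λ (t - τ) x| := abs_add_le _ _
    _ ≤ M₀ + 1 := add_le_add hb key.le

lemma young_aux {p : ℝ} (hp : 1 < p) {A L : ℝ} (hA : 0 < A) (hL : 0 < L) :
    L ≤ A + L ^ p * A ^ (1 - p) := by
  rcases le_or_gt L A with h | h
  · have h1 : (0:ℝ) ≤ L ^ p * A ^ (1 - p) :=
      mul_nonneg (Real.rpow_nonneg hL.le p) (Real.rpow_nonneg hA.le _)
    linarith
  · have h1 : L ^ (1 - p) ≤ A ^ (1 - p) :=
      Real.rpow_le_rpow_of_nonpos hA h.le (by linarith)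
    have h2 : L ^ p * L ^ (1 - p) = L := by
      rw [← Real.rpow_add hL]; norm_num
    have h3 : L ^ p * L ^ (1 - p) ≤ L ^ p * A ^ (1 - p) :=
      mul_le_mul_of_nonneg_left h1 (Real.rpow_nonneg hL.le p)
    rw [h2] at h3
    linarith

lemma InM.tendsto_toReal {ν : Measure ℝ} (hν : InM ν) :
    Tendsto (fun z : ℝ => (ν (Set.Icc (-z) z)).toReal) atTop atTop := by
  rw [tendsto_atTop]
  intro M
  have hmono : Monotone (fun n : ℕ => Set.Icc (-(n:ℝ)) (n:ℝ)) := by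
    intro m n hmn
    exact Set.Icc_subset_Icc (by simp; exact_mod_cast hmn) (by exact_mod_cast hmn)
  have hU : (⋃ n : ℕ, Set.Icc (-(n:ℝ)) (n:ℝ)) = Set.univ := by
    ext x
    simp only [Set.mem_iUnion, Set.mem_Icc, Set.mem_univ, iff_true]
    obtain ⟨n, hn⟩ := exists_nat_ge |x|
    exact ⟨n, by linarith [neg_abs_le x], by linarith [le_abs_self x]⟩
  have htend := tendsto_measure_iUnion_atTop (μ := ν) hmono
  rw [hU, hν.1] at htend
  have hlt : ENNReal.ofReal M < ⊤ := ENNReal.ofReal_lt_top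
  obtain ⟨n, hn⟩ := (htend.eventually_const_lt hlt).exists
  rw [eventually_atTop]
  refine ⟨n, fun z hz => ?_⟩
  have hsub : ν (Set.Icc (-(n:ℝ)) (n:ℝ)) ≤ ν (Set.Icc (-z) z) :=
    measure_mono (Set.Icc_subset_Icc (by linarith) hz)
  have hfin : ν (Set.Icc (-z) z) ≠ ⊤ := (hν.2 _ _ (by have := Nat.cast_nonneg (α := ℝ) n; linarith : -z ≤ z)).ne
  exact (ENNReal.ofReal_le_iff_le_toReal hfin).1 (le_trans hn.le hsub)

theorem composition_pap (μ ν : Measure ℝ) (hμ : InM μ) (hν : InM ν) (hM2 : M2 μ ν)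
    (p : ℝ) (hp : 1 < p)
    (Λ : ℝ → ℝ → ℝ) (hΛapu : APU Λ)
    (LΛ : ℝ → ℝ) (hLcont : Continuous LΛ) (hLpos : ∀ t, 0 < LΛ t)
    (hLp : Integrable (fun t => LΛ t ^ p) μ)
    (hLip : ∀ t u v : ℝ, |Λ t u - Λ t v| ≤ LΛ t * |u - v|)
    (y : ℝ → ℝ) (hy : PAP μ ν y) (θ : ℝ) :
    PAP μ ν (fun s => Λ s (y (s - θ))) := by
  have : IsFiniteMeasureOnCompacts μ := hμ.finOnCompacts
  obtain ⟨⟨hycont, Cy₀, hCy₀⟩, -⟩ := hy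
  set Cy : ℝ := max Cy₀ 0 with hCydef
  have hCy0 : 0 ≤ Cy := le_max_right _ _
  have hCy : ∀ t, |y t| ≤ Cy := fun t => le_trans (by simpa [Real.norm_eq_abs] using hCy₀ t) (le_max_left _ _)
  -- K := Icc (-Cy) Cy contains 0 and the range of y
  set K : Set ℝ := Set.Icc (-Cy) Cy with hKdef
  have hKcompact : IsCompact K := isCompact_Icc
  have h0K : (0:ℝ) ∈ K := ⟨neg_nonpos_of_nonneg hCy0, hCy0⟩
  have hyK : ∀ t, y t ∈ K := fun t => abs_le.1 (hCy t)
  obtain ⟨M, hM⟩ := apu_bound hΛapu hKcompact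
  -- the decomposition
  set g : ℝ → ℝ := fun t => Λ t 0 with hgdef
  set φ : ℝ → ℝ := fun t => Λ t (y (t - θ)) - Λ t 0 with hφdef
  have hgcont : Continuous g := hΛapu.1.comp (continuous_id.prodMk continuous_const)
  have hfcont : Continuous (fun s => Λ s (y (s - θ))) :=
    hΛapu.1.comp (continuous_id.prodMk (hycont.comp (continuous_sub_right θ)))
  have hφcont : Continuous φ := hfcont.sub hgcont
  have hφbd : ∀ t, |φ t| ≤ 2 * M := by
    intro t
    have h1 : |Λ t (y (t - θ))| ≤ M := hM t _ (hyK _)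
    have h2 : |Λ t 0| ≤ M := hM t 0 h0K
    calc |φ t| ≤ |Λ t (y (t - θ))| + |Λ t 0| := abs_sub _ _
      _ ≤ 2 * M := by linarith
  have hφL : ∀ t, |φ t| ≤ LΛ t * Cy := by
    intro t
    calc |φ t| ≤ LΛ t * |y (t - θ) - 0| := hLip t _ 0
      _ ≤ LΛ t * Cy := by
          rw [sub_zero]
          exact mul_le_mul_of_nonneg_left (hCy _) (hLpos t).le
  refine ⟨⟨hfcont, M, fun t => by simpa [Real.norm_eq_abs] using hM t _ (hyK (t - θ))⟩,
    g, φ, ?_, ?_, fun t => by simp [hgdef, hφdef]⟩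
  · -- g is AP
    refine ⟨hgcont, fun ε hε => ?_⟩
    obtain ⟨l, hl, H⟩ := hΛapu.2 {0} isCompact_singleton ε hε
    refine ⟨l, hl, fun a => ?_⟩
    obtain ⟨τ, hτ, hτ'⟩ := H a
    exact ⟨τ, hτ, fun t => by simpa [hgdef, Real.norm_eq_abs] using hτ' t 0 rfl⟩
  · -- φ is ergodic
    refine ⟨⟨hφcont, 2 * M, fun t => by simpa [Real.norm_eq_abs] using hφbd t⟩, ?_⟩
    set I : ℝ := ∫ t, LΛ t ^ p ∂μ with hIdef
    have hI0 : 0 ≤ I := integral_nonneg fun t => Real.rpow_nonneg (hLpos t).le p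
    -- M2 gives an eventual ratio bound
    have hbne : Filter.limsup (fun r : ℝ => μ (Set.Icc (-r) r) / ν (Set.Icc (-r) r)) Filter.atTop ≠ ⊤ := hM2.ne
    set b : ENNReal := Filter.limsup (fun r : ℝ => μ (Set.Icc (-r) r) / ν (Set.Icc (-r) r)) Filter.atTop + 1 with hbdef
    have hbtop : b ≠ ⊤ := by
      rw [hbdef]
      exact ENNReal.add_ne_top.2 ⟨hbne, ENNReal.one_ne_top⟩
    have hbev : ∀ᶠ z in atTop, μ (Set.Icc (-z) z) / ν (Set.Icc (-z) z) < b :=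
      Filter.eventually_lt_of_limsup_lt (ENNReal.lt_add_right hbne one_ne_zero)
    set Rr : ℝ := b.toReal with hRdef
    have hRr0 : 0 ≤ Rr := ENNReal.toReal_nonneg
    have hratio : ∀ᶠ z in atTop, z ≥ 0 ∧
        (μ (Set.Icc (-z) z)).toReal ≤ Rr * (ν (Set.Icc (-z) z)).toReal := by
      filter_upwards [hbev, eventually_ge_atTop (0:ℝ)] with z hz hz0
      refine ⟨hz0, ?_⟩
      have hνfin : ν (Set.Icc (-z) z) ≠ ⊤ := (hν.2 _ _ (by linarith)).ne
      have h1 : μ (Set.Icc (-z) z) ≤ b * ν (Set.Icc (-z) z) :=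
        (ENNReal.div_le_iff_le_mul (Or.inr hbtop) (Or.inl hνfin)).1 hz.le
      have h2 := ENNReal.toReal_mono (ENNReal.mul_ne_top hbtop hνfin) h1
      rwa [ENNReal.toReal_mul] at h2
    rw [NormedAddCommGroup.tendsto_nhds_zero]
    intro ε hε
    set A : ℝ := ε / (2 * (Cy + 1) * (Rr + 1)) with hAdef
    have hA : 0 < A := by
      apply div_pos hε
      positivity
    set P : ℝ := A ^ (1 - p) with hPdef
    have hP : 0 < P := Real.rpow_pos_of_pos hA _
    set T : ℝ := 2 * (Cy * P * I) / ε + 1 with hTdef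
    have hT1 : 1 ≤ T := by
      rw [hTdef]
      have h0 : 0 ≤ 2 * (Cy * P * I) / ε := by positivity
      linarith
    have hT0 : 0 < T := by linarith
    filter_upwards [hratio, hν.tendsto_toReal.eventually_ge_atTop T] with z ⟨hz0, hz⟩ hzT
    set νt : ℝ := (ν (Set.Icc (-z) z)).toReal with hνtdef
    have hνt0 : 0 < νt := lt_of_lt_of_le hT0 hzT
    set μt : ℝ := (μ (Set.Icc (-z) z)).toReal with hμtdef
    -- integral estimate
    have hIz : ∫ t in Set.Icc (-z) z, LΛ t ^ p ∂μ ≤ I :=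
      setIntegral_le_integral hLp (Eventually.of_forall fun t => Real.rpow_nonneg (hLpos t).le p)
    have hIz0 : 0 ≤ ∫ t in Set.Icc (-z) z, LΛ t ^ p ∂μ :=
      setIntegral_nonneg measurableSet_Icc fun t _ => Real.rpow_nonneg (hLpos t).le p
    have hφint : IntegrableOn (fun t => ‖φ t‖) (Set.Icc (-z) z) μ :=
      hφcont.norm.integrableOn_Icc
    have hconst_int : IntegrableOn (fun _ : ℝ => Cy * A) (Set.Icc (-z) z) μ :=
      integrableOn_const (hμ.2 _ _ (by linarith)).ne
    have hLpint : IntegrableOn (fun t => Cy * P * LΛ t ^ p) (Set.Icc (-z) z) μ :=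
      (hLp.integrableOn.const_mul (Cy * P))
    have hbound : ∫ t in Set.Icc (-z) z, ‖φ t‖ ∂μ ≤
        ∫ t in Set.Icc (-z) z, (Cy * A + Cy * P * LΛ t ^ p) ∂μ := by
      refine setIntegral_mono_on hφint (hconst_int.add hLpint) measurableSet_Icc fun t _ => ?_
      have h1 : LΛ t ≤ A + LΛ t ^ p * P := young_aux hp hA (hLpos t)
      have h2 : ‖φ t‖ ≤ LΛ t * Cy := by simpa [Real.norm_eq_abs] using hφL t
      have h3 : LΛ t * Cy ≤ (A + LΛ t ^ p * P) * Cy :=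
        mul_le_mul_of_nonneg_right h1 hCy0
      calc ‖φ t‖ ≤ (A + LΛ t ^ p * P) * Cy := le_trans h2 h3
        _ = Cy * A + Cy * P * LΛ t ^ p := by ring
    have heq : ∫ t in Set.Icc (-z) z, (Cy * A + Cy * P * LΛ t ^ p) ∂μ
        = Cy * A * μt + Cy * P * ∫ t in Set.Icc (-z) z, LΛ t ^ p ∂μ := by
      rw [integral_add hconst_int hLpint, setIntegral_const, integral_const_mul]
      rw [smul_eq_mul, Measure.real]
      ring
    have hchain : ∫ t in Set.Icc (-z) z, ‖φ t‖ ∂μ ≤ Cy * A * μt + Cy * P * I := by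
      rw [heq] at hbound
      have := mul_le_mul_of_nonneg_left hIz (by positivity : (0:ℝ) ≤ Cy * P)
      linarith
    have hμtR : μt ≤ Rr * νt := hz
    have hint0 : 0 ≤ ∫ t in Set.Icc (-z) z, ‖φ t‖ ∂μ :=
      setIntegral_nonneg measurableSet_Icc fun t _ => norm_nonneg _
    have hval : νt⁻¹ * ∫ t in Set.Icc (-z) z, ‖φ t‖ ∂μ ≤ Cy * A * Rr + Cy * P * I / νt := by
      have h1 : νt⁻¹ * ∫ t in Set.Icc (-z) z, ‖φ t‖ ∂μ ≤ νt⁻¹ * (Cy * A * μt + Cy * P * I) :=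
        mul_le_mul_of_nonneg_left hchain (inv_nonneg.2 hνt0.le)
      have h2 : νt⁻¹ * (Cy * A * μt + Cy * P * I) ≤ νt⁻¹ * (Cy * A * (Rr * νt) + Cy * P * I) := by
        apply mul_le_mul_of_nonneg_left _ (inv_nonneg.2 hνt0.le)
        have := mul_le_mul_of_nonneg_left hμtR (by positivity : (0:ℝ) ≤ Cy * A)
        linarith
      have h3 : νt⁻¹ * (Cy * A * (Rr * νt) + Cy * P * I) = Cy * A * Rr + Cy * P * I / νt := by
        field_simp
      linarith
    -- first term < ε/2
    have hfirst : Cy * A * Rr < ε / 2 := by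
      have hD : (0:ℝ) < 2 * (Cy + 1) * (Rr + 1) := by positivity
      rw [hAdef,
        show Cy * (ε / (2 * (Cy + 1) * (Rr + 1))) * Rr
          = Cy * Rr * ε / (2 * (Cy + 1) * (Rr + 1)) by ring,
        div_lt_iff₀ hD]
      nlinarith [mul_pos hε (by positivity : (0:ℝ) < Cy + Rr + 1), mul_nonneg (mul_nonneg hCy0 hRr0) hε.le]
    -- second term ≤ ε/2
    have hsecond : Cy * P * I / νt ≤ ε / 2 := by
      have h1 : Cy * P * I / νt ≤ Cy * P * I / T :=
        div_le_div_of_nonneg_left (by positivity) hT0 hzT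
      have h2 : ε / 2 * T = Cy * P * I + ε / 2 := by
        rw [hTdef]
        field_simp
      have h3 : Cy * P * I / T ≤ ε / 2 := by
        rw [div_le_iff₀ hT0, h2]
        linarith
      linarith
    have hnn : 0 ≤ νt⁻¹ * ∫ t in Set.Icc (-z) z, ‖φ t‖ ∂μ :=
      mul_nonneg (inv_nonneg.2 hνt0.le) hint0
    rw [Real.norm_eq_abs, abs_of_nonneg hnn]
    linarith
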